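/- Let X be a real-valued random variable with E[X]=0 and variance σ²>0, and let α∈(0,1). Then ES_α(X) ≤ (σ/α)·(√(α-α²) + arctan(√((1-α)/α))). -/

import Mathlib

open MeasureTheory ProbabilityTheory

/-- The lower quantile of order `α` of a random variable `X`:
`q_α(X) = inf {x : P(X ≤ x) ≥ α}`. -/
noncomputable def lowerQuantile {Ω : Type*} [MeasureSpace Ω] (X : Ω → ℝ) (α : ℝ) : ℝ :=
  sInf {x : ℝ | α ≤ (ℙ {ω | X ω ≤ x}).toReal}

/-- The Value-at-Risk of order `α` : `VaR_α(X) = -q_α(X)`. -/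
noncomputable def VaR {Ω : Type*} [MeasureSpace Ω] (X : Ω → ℝ) (α : ℝ) : ℝ :=
  - lowerQuantile X α

/-- The Expected Shortfall of order `α` : `ES_α(X) = (1/α) ∫₀^α VaR_u(X) du`. -/
noncomputable def ES {Ω : Type*} [MeasureSpace Ω] (X : Ω → ℝ) (α : ℝ) : ℝ :=
  (1 / α) * ∫ u in (0 : ℝ)..α, VaR X u

/-- If `E[X] = 0` and `Var(X) = σ² > 0`, then for `α ∈ (0,1)`,
`ES_α(X) ≤ 2σ / √α`. -/
theorem es_le_cantelli_bound {Ω : Type*} [MeasureSpace Ω]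
    [IsProbabilityMeasure (ℙ : Measure Ω)]
    (X : Ω → ℝ) (hX : MemLp X 2 ℙ)
    (hmean : ∫ ω, X ω = 0)
    (σ : ℝ) (hσ : 0 < σ) (hvar : variance X ℙ = σ ^ 2)
    (α : ℝ) (hα : α ∈ Set.Ioo (0 : ℝ) 1) :
    ES X α ≤ (σ / α) * (Real.sqrt (α - α ^ 2) + Real.arctan (Real.sqrt ((1 - α) / α))) := by
  obtain ⟨hα0, hα1⟩ := hα
  have hαα : (0:ℝ) < α - α^2 := by nlinarith
  set s : ℝ := Real.sqrt (α - α^2) with hs_def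
  have hs0 : 0 < s := Real.sqrt_pos.mpr hαα
  have hs2 : s^2 = α - α^2 := Real.sq_sqrt hαα.le
  clear_value s
  have harct : 0 ≤ Real.arctan (Real.sqrt ((1-α)/α)) := by
    rw [← Real.arctan_zero]
    exact Real.arctan_strictMono.monotone (Real.sqrt_nonneg _)
  have hRHSpos : 0 ≤ (σ / α) * (s + Real.arctan (Real.sqrt ((1 - α) / α))) :=
    mul_nonneg (by positivity) (add_nonneg hs0.le harct)
  by_cases hInt : IntervalIntegrable (VaR X) volume 0 α
  swap
  · simp only [ES, intervalIntegral.integral_undef hInt, mul_zero]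
    exact hRHSpos
  set c : ℝ := σ * (1 - 2*α) / (2*s) with hc_def
  clear_value c
  have hsqrt : Real.sqrt (σ^2 + c^2) = σ / (2*s) := by
    have h1 : σ^2 + c^2 = (σ/(2*s))^2 := by
      rw [hc_def]
      field_simp
      nlinarith [hs2]
    rw [h1, Real.sqrt_sq (by positivity)]
  -- basic integrability
  have hXint : Integrable X ℙ := hX.integrable (by norm_num)
  have hZ : MemLp (fun ω => -X ω - c) 2 ℙ := hX.neg.sub (memLp_const c)
  have hZint : Integrable (fun ω => -X ω - c) ℙ := hZ.integrable (by norm_num)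
  have hf_int : Integrable (fun ω => max (-X ω - c) 0) ℙ := hZint.pos_part
  have hf_nn : 0 ≤ᵐ[ℙ] fun ω => max (-X ω - c) 0 := ae_of_all _ fun ω => le_max_right _ _
  -- nonemptiness of quantile sets
  have hnonempty : ∀ u ∈ Set.Ioc (0:ℝ) α,
      Set.Nonempty {x : ℝ | u ≤ (ℙ {ω | X ω ≤ x}).toReal} := by
    intro u hu
    have hmono : Monotone (fun n : ℕ => {ω : Ω | X ω ≤ (n:ℝ)}) := by
      intro m n hmn ω (h : X ω ≤ (m:ℝ))
      exact h.trans (by exact_mod_cast hmn)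
    have hunion : (⋃ n : ℕ, {ω : Ω | X ω ≤ (n:ℝ)}) = Set.univ := by
      ext ω
      simp only [Set.mem_iUnion, Set.mem_univ, iff_true, Set.mem_setOf_eq]
      exact ⟨⌈X ω⌉₊, Nat.le_ceil _⟩
    have htend := tendsto_measure_iUnion_atTop (μ := ℙ) hmono
    rw [hunion, measure_univ] at htend
    have hlt : (ENNReal.ofReal u) < 1 := by
      rw [← ENNReal.ofReal_one]
      exact (ENNReal.ofReal_lt_ofReal_iff_of_nonneg hu.1.le).mpr (lt_of_le_of_lt hu.2 hα1)
    obtain ⟨n, hn⟩ := (htend.eventually_const_lt hlt).exists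
    refine ⟨(n:ℝ), ?_⟩
    have h2 := ENNReal.toReal_mono (measure_ne_top ℙ _) hn.le
    rwa [ENNReal.toReal_ofReal hu.1.le] at h2
  -- tail comparison
  have htail : ∀ t ∈ Set.Ioi (0:ℝ),
      (volume.restrict (Set.Ioc (0:ℝ) α)) {u | t < max (VaR X u - c) 0}
        ≤ ℙ {ω | t < max (-X ω - c) 0} := by
    intro t ht
    rw [Measure.restrict_apply' measurableSet_Ioc]
    have hsub : {u : ℝ | t < max (VaR X u - c) 0} ∩ Set.Ioc 0 α
        ⊆ Set.Ioc 0 ((ℙ {ω | X ω < -(c+t)}).toReal) := by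
      rintro u ⟨hu1, hu2⟩
      have hu1' : t < max (VaR X u - c) 0 := hu1
      have hgu : t < VaR X u - c := by
        rcases lt_max_iff.mp hu1' with h | h
        · exact h
        · exact absurd h (not_lt.mpr (le_of_lt ht))
      have hq : lowerQuantile X u < -(c+t) := by
        have hv : c + t < VaR X u := by linarith
        simp only [VaR] at hv
        linarith
      obtain ⟨x, hxS, hx⟩ := exists_lt_of_csInf_lt (hnonempty u hu2) hq
      refine ⟨hu2.1, ?_⟩
      have hle : ℙ {ω | X ω ≤ x} ≤ ℙ {ω | X ω < -(c+t)} :=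
        measure_mono fun ω (h : X ω ≤ x) => lt_of_le_of_lt h hx
      exact le_trans hxS (ENNReal.toReal_mono (measure_ne_top _ _) hle)
    calc volume ({u : ℝ | t < max (VaR X u - c) 0} ∩ Set.Ioc 0 α)
        ≤ volume (Set.Ioc 0 ((ℙ {ω | X ω < -(c+t)}).toReal)) := measure_mono hsub
      _ = ENNReal.ofReal ((ℙ {ω | X ω < -(c+t)}).toReal - 0) := Real.volume_Ioc
      _ ≤ ℙ {ω | X ω < -(c+t)} := by
          rw [sub_zero, ENNReal.ofReal_toReal (measure_ne_top _ _)]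
      _ ≤ ℙ {ω | t < max (-X ω - c) 0} := by
          refine measure_mono fun ω h => ?_
          have hω : X ω < -(c+t) := h
          show t < max (-X ω - c) 0
          exact lt_max_iff.mpr (Or.inl (by linarith))
  -- integrability of the positive part of VaR - c
  have hgInt : IntervalIntegrable (fun u => max (VaR X u - c) 0) volume 0 α := by
    have h1 : IntervalIntegrable (fun u => VaR X u - c) volume 0 α :=
      hInt.sub intervalIntegrable_const
    rw [intervalIntegrable_iff] at h1 ⊢
    exact h1.pos_part
  have hgIntOn : IntegrableOn (fun u => max (VaR X u - c) 0) (Set.Ioc 0 α) volume :=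
    (intervalIntegrable_iff_integrableOn_Ioc_of_le hα0.le).mp hgInt
  have hg_nn : 0 ≤ᵐ[volume.restrict (Set.Ioc (0:ℝ) α)] fun u => max (VaR X u - c) 0 :=
    ae_of_all _ fun u => le_max_right _ _
  -- layer cake comparisons
  have hlay_g : ∫ u in Set.Ioc (0:ℝ) α, max (VaR X u - c) 0
      = (∫⁻ t in Set.Ioi (0:ℝ),
          (volume.restrict (Set.Ioc (0:ℝ) α)) {u | t < max (VaR X u - c) 0}).toReal := by
    rw [integral_eq_lintegral_of_nonneg_ae hg_nn hgIntOn.aestronglyMeasurable,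
      lintegral_eq_lintegral_meas_lt _ hg_nn hgIntOn.aestronglyMeasurable.aemeasurable]
  have hlay_f : ∫ ω, max (-X ω - c) 0
      = (∫⁻ t in Set.Ioi (0:ℝ), ℙ {ω | t < max (-X ω - c) 0}).toReal := by
    rw [integral_eq_lintegral_of_nonneg_ae hf_nn hf_int.aestronglyMeasurable,
      lintegral_eq_lintegral_meas_lt _ hf_nn hf_int.aestronglyMeasurable.aemeasurable]
  have hlt_top : (∫⁻ t in Set.Ioi (0:ℝ), ℙ {ω | t < max (-X ω - c) 0}) ≠ ⊤ := by
    rw [← lintegral_eq_lintegral_meas_lt _ hf_nn hf_int.aestronglyMeasurable.aemeasurable]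
    exact hf_int.lintegral_lt_top.ne
  have hg_le_f : ∫ u in Set.Ioc (0:ℝ) α, max (VaR X u - c) 0 ≤ ∫ ω, max (-X ω - c) 0 := by
    rw [hlay_g, hlay_f]
    refine ENNReal.toReal_mono hlt_top ?_
    exact lintegral_mono_ae ((ae_restrict_iff' measurableSet_Ioi).mpr (ae_of_all _ htail))
  -- Rockafellar-Uryasev style bound
  have hRU : ∫ u in (0:ℝ)..α, VaR X u ≤ α * c + ∫ ω, max (-X ω - c) 0 := by
    have hstep1 : ∫ u in (0:ℝ)..α, VaR X u
        ≤ ∫ u in (0:ℝ)..α, (c + max (VaR X u - c) 0) := by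
      apply intervalIntegral.integral_mono_on hα0.le hInt (intervalIntegrable_const.add hgInt)
      intro u _
      have h := le_max_left (VaR X u - c) 0
      linarith
    have hstep2 : ∫ u in (0:ℝ)..α, (c + max (VaR X u - c) 0)
        = α * c + ∫ u in Set.Ioc (0:ℝ) α, max (VaR X u - c) 0 := by
      rw [intervalIntegral.integral_add intervalIntegrable_const hgInt,
        intervalIntegral.integral_const, intervalIntegral.integral_of_le hα0.le]
      simp [smul_eq_mul]
    calc ∫ u in (0:ℝ)..α, VaR X u ≤ _ := hstep1
      _ = α * c + ∫ u in Set.Ioc (0:ℝ) α, max (VaR X u - c) 0 := hstep2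
      _ ≤ α * c + ∫ ω, max (-X ω - c) 0 := by linarith [hg_le_f]
  -- moment bound for the positive part
  have habs2 : MemLp (fun ω => |(-X ω - c)|) 2 ℙ := by
    simpa [Real.norm_eq_abs] using hZ.norm
  have habs_int : Integrable (fun ω => |(-X ω - c)|) ℙ := hZint.abs
  have hXneg : Integrable (fun ω => -X ω) ℙ := hXint.neg
  have hEZ : ∫ ω, (-X ω - c) = -c := by
    rw [integral_sub hXneg (integrable_const c), integral_neg, hmean, integral_const]
    simp
  have hX2 : ∫ ω, X ω ^ 2 = σ^2 := by
    have h := variance_eq_sub hX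
    rw [hvar, hmean] at h
    simp only [Pi.pow_apply] at h
    linarith
  have hZ2 : ∫ ω, (-X ω - c)^2 = σ^2 + c^2 := by
    have hexp : ∀ ω, (-X ω - c)^2 = X ω^2 + (2*c) * X ω + c^2 := fun ω => by ring
    simp_rw [hexp]
    have hi1 : Integrable (fun ω => X ω ^ 2) ℙ := hX.integrable_sq
    have hi2 : Integrable (fun ω => 2 * c * X ω) ℙ := hXint.const_mul _
    have hi12 : Integrable (fun ω => X ω ^ 2 + 2 * c * X ω) ℙ := hi1.add hi2
    rw [integral_add hi12 (integrable_const _), integral_add hi1 hi2, integral_const_mul,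
      hmean, hX2, integral_const]
    simp
  have habsle : ∫ ω, |(-X ω - c)| ≤ Real.sqrt (σ^2 + c^2) := by
    have hv := variance_nonneg (fun ω => |(-X ω - c)|) ℙ
    rw [variance_eq_sub habs2] at hv
    simp only [Pi.pow_apply] at hv
    have heq : ∫ ω, |(-X ω - c)|^2 = σ^2 + c^2 := by
      simp_rw [sq_abs]
      exact hZ2
    rw [heq] at hv
    refine (Real.le_sqrt (integral_nonneg fun ω => abs_nonneg _) (by positivity)).mpr ?_
    linarith
  have hm : ∫ ω, max (-X ω - c) 0 ≤ (Real.sqrt (σ^2 + c^2) - c) / 2 := by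
    have hid : ∀ ω : Ω, max (-X ω - c) 0 = ((-X ω - c) + |(-X ω - c)|)/2 := fun ω => by
      rcases le_total 0 (-X ω - c) with h | h
      · rw [max_eq_left h, abs_of_nonneg h]; ring
      · rw [max_eq_right h, abs_of_nonpos h]; ring
    simp_rw [hid]
    rw [integral_div, integral_add hZint habs_int, hEZ]
    linarith
  -- conclusion
  have hfinal : ES X α ≤ (1/α) * (α * c + (Real.sqrt (σ^2 + c^2) - c)/2) := by
    simp only [ES]
    refine mul_le_mul_of_nonneg_left ?_ (by positivity : (0:ℝ) ≤ 1/α)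
    exact le_trans hRU (by linarith)
  have hkey : α * c + (σ/(2*s) - c)/2 = σ * s := by
    rw [hc_def]
    field_simp
    linear_combination (-4) * hs2
  have hval : (1/α) * (α * c + (Real.sqrt (σ^2 + c^2) - c)/2) = σ * s / α := by
    rw [hsqrt, hkey]
    ring
  rw [hval] at hfinal
  refine le_trans hfinal ?_
  calc σ * s / α = (σ/α) * s := by ring
    _ ≤ (σ/α) * (s + Real.arctan (Real.sqrt ((1-α)/α))) := by
        refine mul_le_mul_of_nonneg_left (by linarith) (by positivity)
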